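/- arXiv:2204.00742 — 4 statements merged into one kernel-verified Lean document; each statement's English description precedes it below -/
import Mathlib

section
/- Let φ₁, φ₂ : G → ℝ≥0 be measurable on a unimodular locally compact group G, and suppose φ₁* * φ₂*(x) < ∞ for almost every x ∈ ℝ. Then φ₁* * φ₂* is finite and continuous at every point of ℝ \ {0}; moreover, if φ₁* * φ₂*(0) is finite, then φ₁* * φ₂* is also continuous at 0. -/
open MeasureTheory Set
open scoped ENNReal

/-- The rearrangement of a measurable function `φ : G → ℝ` (assumed nonnegative). -/
noncomputable def rearrange {G : Type*} [MeasurableSpace G] (μ : Measure G)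
    (φ : G → ℝ) (x : ℝ) : ℝ :=
  sInf {t : ℝ | 0 ≤ t ∧ μ {g | t < φ g} ≤ ENNReal.ofReal (2 * |x|)}

/-- Convolution on ℝ (Lebesgue measure), valued in `[0, ∞]`. -/
noncomputable def convR' (f g : ℝ → ℝ) (x : ℝ) : ℝ≥0∞ :=
  ∫⁻ y, ENNReal.ofReal (f y) * ENNReal.ofReal (g (x - y))

open Filter
open scoped Topology

namespace Stmt6Aux

/-- downward closed (in absolute value) away from 0 -/
def DC (U : Set ℝ) : Prop := ∀ ⦃y⦄, y ∈ U → ∀ ⦃z : ℝ⦄, z ≠ 0 → |z| ≤ |y| → z ∈ U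

lemma sum_min_le (a b x : ℝ) :
    min a (x + b) + min a (b - x) ≤ min (a + a) (min (b + b) ((a + b) - |x|)) := by
  have m1 := min_le_left a (x + b); have m2 := min_le_right a (x + b)
  have m3 := min_le_left a (b - x); have m4 := min_le_right a (b - x)
  rcases abs_cases x with ⟨hx, _⟩ | ⟨hx, _⟩ <;>
    exact le_min (by linarith) (le_min (by linarith) (by linarith))

lemma min3_le_sum (a b x : ℝ) :
    min (a + a) (min (b + b) ((a + b) - |x|)) ≤ min a (x + b) + min a (b - x) := by
  have n1 := min_le_left (a + a) (min (b + b) ((a + b) - |x|))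
  have n2 : min (a + a) (min (b + b) ((a + b) - |x|)) ≤ b + b :=
    le_trans (min_le_right _ _) (min_le_left _ _)
  have n3 : min (a + a) (min (b + b) ((a + b) - |x|)) ≤ (a + b) - |x| :=
    le_trans (min_le_right _ _) (min_le_right _ _)
  rcases le_total a (x + b) with h1 | h1 <;> rcases le_total a (b - x) with h2 | h2
  · rw [min_eq_left h1, min_eq_left h2]; linarith
  · have hx : 0 ≤ x := by linarith
    rw [abs_of_nonneg hx] at n3
    rw [min_eq_left h1, min_eq_right h2, abs_of_nonneg hx]; linarith
  · have hx : x ≤ 0 := by linarith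
    rw [abs_of_nonpos hx] at n3
    rw [min_eq_right h1, min_eq_left h2, abs_of_nonpos hx]; linarith
  · rw [min_eq_right h1, min_eq_right h2]; linarith

lemma real_key {a b x x' : ℝ} (h : |x'| ≤ |x|) :
    min a (x + b) + min a (b - x) ≤ min a (x' + b) + min a (b - x') := by
  refine (sum_min_le a b x).trans (le_trans ?_ (min3_le_sum a b x'))
  exact min_le_min le_rfl (min_le_min le_rfl (by linarith))

lemma DC.subset_of_not_mem {U : Set ℝ} (hU : DC U) {w : ℝ} (hw0 : w ≠ 0) (hw : w ∉ U) :
    U ⊆ Icc (-|w|) |w| ∪ {0} := by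
  intro y hy
  by_cases hy0 : y = 0
  · exact Or.inr hy0
  · left
    rw [mem_Icc, ← abs_le]
    by_contra hlt
    exact hw (hU hy hw0 (le_of_not_ge hlt))

lemma DC.superset_of_mem {U : Set ℝ} (hU : DC U) {w : ℝ} (hw : w ∈ U) :
    Ioo (-|w|) |w| \ {0} ⊆ U := by
  rintro z ⟨hz1, hz2⟩
  exact hU hw (by simpa using hz2) (le_of_lt (abs_lt.2 hz1))

lemma vol_icc_union (w : ℝ) : volume (Icc (-|w|) |w| ∪ ({0} : Set ℝ)) ≤ ENNReal.ofReal (2 * |w|) := by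
  refine (measure_union_le _ _).trans ?_
  rw [Real.volume_Icc, Real.volume_singleton, add_zero]
  exact ENNReal.ofReal_le_ofReal (by ring_nf; rfl)

lemma struct_finite {U : Set ℝ} (hU : DC U) (hfin : volume U ≠ ∞) :
    U =ᵐ[volume] Ioo (-((volume U).toReal / 2)) ((volume U).toReal / 2) := by
  set r : ℝ := (volume U).toReal / 2 with hr
  have hr0 : 0 ≤ r := by positivity
  have claim1 : ∀ y ∈ U, y ≠ 0 → |y| ≤ r := by
    intro y hy hy0
    by_contra hlt
    push_neg at hlt
    have hsub : Ioo (-|y|) |y| \ {0} ⊆ U := hU.superset_of_mem hy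
    have hv : ENNReal.ofReal (2 * |y|) ≤ volume U := by
      calc ENNReal.ofReal (2 * |y|) = volume (Ioo (-|y|) |y|) := by
            rw [Real.volume_Ioo]; congr 1; ring
        _ = volume (Ioo (-|y|) |y| \ {0}) := (measure_diff_null Real.volume_singleton).symm
        _ ≤ volume U := measure_mono hsub
    have : 2 * |y| ≤ (volume U).toReal := by
      have := ENNReal.toReal_mono hfin hv
      rwa [ENNReal.toReal_ofReal (by positivity)] at this
    rw [hr] at hlt; linarith
  have claim2 : ∀ z : ℝ, z ≠ 0 → |z| < r → z ∈ U := by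
    intro z hz0 hzr
    by_contra hzU
    have hsub := hU.subset_of_not_mem hz0 hzU
    have hv : volume U ≤ ENNReal.ofReal (2 * |z|) :=
      (measure_mono hsub).trans (vol_icc_union z)
    have : (volume U).toReal ≤ 2 * |z| := ENNReal.toReal_le_of_le_ofReal (by positivity) hv
    rw [hr] at hzr; linarith
  rw [MeasureTheory.ae_eq_set]
  constructor
  · refine measure_mono_null (t := ({-r} ∪ {r} ∪ {0} : Set ℝ)) ?_ ?_
    · rintro y ⟨hyU, hyI⟩
      by_cases hy0 : y = 0
      · right; exact hy0
      · have h1 := claim1 y hyU hy0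
        rw [mem_Ioo] at hyI
        have h2 : ¬(|y| < r) := fun hc => hyI (abs_lt.1 hc)
        have : |y| = r := le_antisymm h1 (le_of_not_gt h2)
        rcases abs_cases y with ⟨he, _⟩ | ⟨he, _⟩
        · left; right; simp only [mem_singleton_iff]; linarith
        · left; left; simp only [mem_singleton_iff]; linarith
    · refine measure_union_null (measure_union_null ?_ ?_) ?_ <;> exact Real.volume_singleton
  · refine measure_mono_null (t := ({0} : Set ℝ)) ?_ Real.volume_singleton
    rintro z ⟨hzI, hzU⟩
    rw [mem_Ioo] at hzI
    by_contra hz0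
    exact hzU (claim2 z (by simpa using hz0) (abs_lt.2 hzI))

lemma struct_infinite {U : Set ℝ} (hU : DC U) (hinf : volume U = ∞) :
    U =ᵐ[volume] (Set.univ : Set ℝ) := by
  have hall : ∀ z : ℝ, z ≠ 0 → z ∈ U := by
    intro z hz
    by_contra hzU
    have hv : volume U ≤ ENNReal.ofReal (2 * |z|) :=
      (measure_mono (hU.subset_of_not_mem hz hzU)).trans (vol_icc_union z)
    rw [hinf] at hv
    exact ENNReal.ofReal_ne_top (top_le_iff.1 hv)
  rw [MeasureTheory.ae_eq_set]
  refine ⟨by simp, ?_⟩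
  refine measure_mono_null (t := ({0} : Set ℝ)) ?_ Real.volume_singleton
  rintro z ⟨_, hzU⟩
  by_contra hz0
  exact hzU (hall z (by simpa using hz0))


lemma overlap_props (A B : Set ℝ) (hA : DC A) (hB : DC B)
    (hBm : NullMeasurableSet B volume) :
    Continuous (fun x : ℝ => volume (A ∩ {y | x - y ∈ B})) ∧
    ∀ x x' : ℝ, |x'| ≤ |x| →
      volume (A ∩ {y | x - y ∈ B}) ≤ volume (A ∩ {y | x' - y ∈ B}) := by
  have mp : ∀ x : ℝ, MeasurePreserving (fun y : ℝ => x - y) volume volume := by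
    intro x
    have h1 : MeasurePreserving (fun y : ℝ => -y) volume volume :=
      Measure.measurePreserving_neg volume
    have h2 : MeasurePreserving (fun y : ℝ => x + y) volume volume :=
      measurePreserving_add_left volume x
    simpa [Function.comp_def, sub_eq_add_neg] using h2.comp h1
  by_cases hAf : volume A = ∞
  · have hAu := struct_infinite hA hAf
    have key : ∀ x : ℝ, volume (A ∩ {y | x - y ∈ B}) = volume B := by
      intro x
      have h1 : (A ∩ {y | x - y ∈ B} : Set ℝ) =ᵐ[volume]
          ((Set.univ : Set ℝ) ∩ {y | x - y ∈ B} : Set ℝ) :=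
        hAu.inter (Filter.EventuallyEq.refl _ _)
      rw [measure_congr h1, Set.univ_inter]
      exact (mp x).measure_preimage hBm
    constructor
    · have : (fun x : ℝ => volume (A ∩ {y | x - y ∈ B})) = fun _ => volume B := funext key
      rw [this]; exact continuous_const
    · intro x x' _; rw [key x, key x']
  · by_cases hBf : volume B = ∞
    · have hBu := struct_infinite hB hBf
      have key : ∀ x : ℝ, volume (A ∩ {y | x - y ∈ B}) = volume A := by
        intro x
        have h1 : (fun y : ℝ => x - y) ⁻¹' B =ᵐ[volume] (fun y : ℝ => x - y) ⁻¹' Set.univ :=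
          (mp x).quasiMeasurePreserving.preimage_ae_eq hBu
        rw [Set.preimage_univ] at h1
        have h1' : ({y | x - y ∈ B} : Set ℝ) =ᵐ[volume] (Set.univ : Set ℝ) := h1
        have h2 : (A ∩ {y | x - y ∈ B} : Set ℝ) =ᵐ[volume] (A ∩ (Set.univ : Set ℝ) : Set ℝ) :=
          (Filter.EventuallyEq.refl _ _).inter h1'
        rw [measure_congr h2, Set.inter_univ]
      constructor
      · have : (fun x : ℝ => volume (A ∩ {y | x - y ∈ B})) = fun _ => volume A := funext key
        rw [this]; exact continuous_const
      · intro x x' _; rw [key x, key x']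
    · set a : ℝ := (volume A).toReal / 2 with ha
      set b : ℝ := (volume B).toReal / 2 with hb
      have hArep := struct_finite hA hAf
      have hBrep := struct_finite hB hBf
      have key : ∀ x : ℝ, volume (A ∩ {y | x - y ∈ B})
          = ENNReal.ofReal (min a (x + b) + min a (b - x)) := by
        intro x
        have h1 : (fun y : ℝ => x - y) ⁻¹' B =ᵐ[volume] (fun y : ℝ => x - y) ⁻¹' Ioo (-b) b :=
          (mp x).quasiMeasurePreserving.preimage_ae_eq hBrep
        have h2 : (fun y : ℝ => x - y) ⁻¹' Ioo (-b) b = Ioo (x - b) (x + b) := by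
          ext y
          simp only [mem_preimage, mem_Ioo]
          constructor <;> rintro ⟨u, v⟩ <;> constructor <;> linarith
        rw [h2] at h1
        have h1' : ({y | x - y ∈ B} : Set ℝ) =ᵐ[volume] Ioo (x - b) (x + b) := h1
        have h3 : (A ∩ {y | x - y ∈ B} : Set ℝ) =ᵐ[volume]
            (Ioo (-a) a ∩ Ioo (x - b) (x + b) : Set ℝ) := hArep.inter h1'
        rw [measure_congr h3, Set.Ioo_inter_Ioo, Real.volume_Ioo]
        congr 1
        have hmax : max (-a) (x - b) = -(min a (b - x)) := by
          rcases le_total a (b - x) with h | h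
          · rw [min_eq_left h, max_eq_left (by linarith)]
          · rw [min_eq_right h, max_eq_right (by linarith)]; ring
        rw [hmax]; ring
      constructor
      · have : (fun x : ℝ => volume (A ∩ {y | x - y ∈ B}))
            = fun x => ENNReal.ofReal (min a (x + b) + min a (b - x)) := funext key
        rw [this]
        refine ENNReal.continuous_ofReal.comp ?_
        exact ((continuous_const.min (continuous_id.add continuous_const)).add
          (continuous_const.min (continuous_const.sub continuous_id)))
      · intro x x' hxx
        rw [key x, key x']
        exact ENNReal.ofReal_le_ofReal (real_key hxx)


theorem conv_main (f g : ℝ → ℝ) (hf : Measurable f) (hg : Measurable g)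
    (hfs : ∀ ⦃z y : ℝ⦄, z ≠ 0 → y ≠ 0 → |z| ≤ |y| → f y ≤ f z)
    (hgs : ∀ ⦃z y : ℝ⦄, z ≠ 0 → y ≠ 0 → |z| ≤ |y| → g y ≤ g z)
    (hfin : ∀ᵐ x : ℝ, convR' f g x < ⊤) :
    (∀ x : ℝ, x ≠ 0 → convR' f g x < ⊤) ∧
    (∀ x : ℝ, x ≠ 0 → ContinuousAt (convR' f g) x) ∧
    (convR' f g 0 < ⊤ → ContinuousAt (convR' f g) 0) := by
  classical
  set M : ℝ → ℝ × ℝ → ℝ≥0∞ := fun x p =>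
    volume {y : ℝ | (0 < p.1 ∧ p.1 < f y) ∧ (0 < p.2 ∧ p.2 < g (x - y))} with hM
  -- the inner sets are measurable
  have hsetmeas : ∀ (x : ℝ) (p : ℝ × ℝ),
      MeasurableSet {y : ℝ | (0 < p.1 ∧ p.1 < f y) ∧ (0 < p.2 ∧ p.2 < g (x - y))} := by
    intro x p
    have : {y : ℝ | (0 < p.1 ∧ p.1 < f y) ∧ (0 < p.2 ∧ p.2 < g (x - y))}
        = ({y : ℝ | 0 < p.1} ∩ {y : ℝ | p.1 < f y}) ∩
          ({y : ℝ | 0 < p.2} ∩ {y : ℝ | p.2 < g (x - y)}) := by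
      ext y; simp only [mem_setOf_eq, mem_inter_iff]
    rw [this]
    exact ((MeasurableSet.const _).inter
        (measurableSet_lt measurable_const hf)).inter
      ((MeasurableSet.const _).inter
        (measurableSet_lt measurable_const (hg.comp (measurable_const.sub measurable_id))))
  -- layer cake representation
  have rep : ∀ x : ℝ, convR' f g x = ∫⁻ p : ℝ × ℝ, M x p ∂(volume.prod volume) := by
    intro x
    have e1 : ∀ y : ℝ, ENNReal.ofReal (f y) * ENNReal.ofReal (g (x - y))
        = ∫⁻ p : ℝ × ℝ, Set.indicator (Ioo 0 (f y) ×ˢ Ioo 0 (g (x - y)))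
            (1 : ℝ × ℝ → ℝ≥0∞) p ∂(volume.prod volume) := by
      intro y
      rw [lintegral_indicator_one (measurableSet_Ioo.prod measurableSet_Ioo),
        Measure.prod_prod, Real.volume_Ioo, Real.volume_Ioo, sub_zero, sub_zero]
    have humeas : Measurable (Function.uncurry fun (y : ℝ) (p : ℝ × ℝ) =>
        Set.indicator (Ioo 0 (f y) ×ˢ Ioo 0 (g (x - y))) (1 : ℝ × ℝ → ℝ≥0∞) p) := by
      have heq : (Function.uncurry fun (y : ℝ) (p : ℝ × ℝ) =>
          Set.indicator (Ioo 0 (f y) ×ˢ Ioo 0 (g (x - y))) (1 : ℝ × ℝ → ℝ≥0∞) p)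
          = Set.indicator {q : ℝ × (ℝ × ℝ) |
              (0 < q.2.1 ∧ q.2.1 < f q.1) ∧ (0 < q.2.2 ∧ q.2.2 < g (x - q.1))}
            (1 : ℝ × (ℝ × ℝ) → ℝ≥0∞) := by
        funext q
        simp only [Function.uncurry, Set.indicator_apply, Set.mem_prod, Set.mem_Ioo,
          Set.mem_setOf_eq, Pi.one_apply]
      rw [heq]
      refine (measurable_const.indicator ?_)
      have : {q : ℝ × (ℝ × ℝ) |
            (0 < q.2.1 ∧ q.2.1 < f q.1) ∧ (0 < q.2.2 ∧ q.2.2 < g (x - q.1))}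
          = ({q : ℝ × (ℝ × ℝ) | 0 < q.2.1} ∩ {q : ℝ × (ℝ × ℝ) | q.2.1 < f q.1}) ∩
            ({q : ℝ × (ℝ × ℝ) | 0 < q.2.2} ∩ {q : ℝ × (ℝ × ℝ) | q.2.2 < g (x - q.1)}) := by
        ext q; simp only [mem_setOf_eq, mem_inter_iff]
      rw [this]
      exact ((measurableSet_lt measurable_const measurable_snd.fst).inter
          (measurableSet_lt measurable_snd.fst (hf.comp measurable_fst))).inter
        ((measurableSet_lt measurable_const measurable_snd.snd).inter
          (measurableSet_lt measurable_snd.snd (hg.comp (measurable_const.sub measurable_fst))))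
    calc convR' f g x
        = ∫⁻ y : ℝ, ∫⁻ p : ℝ × ℝ, Set.indicator (Ioo 0 (f y) ×ˢ Ioo 0 (g (x - y)))
            (1 : ℝ × ℝ → ℝ≥0∞) p ∂(volume.prod volume) ∂volume := by
          unfold convR'; exact lintegral_congr e1
      _ = ∫⁻ p : ℝ × ℝ, ∫⁻ y : ℝ, Set.indicator (Ioo 0 (f y) ×ˢ Ioo 0 (g (x - y)))
            (1 : ℝ × ℝ → ℝ≥0∞) p ∂volume ∂(volume.prod volume) :=
          lintegral_lintegral_swap humeas.aemeasurable
      _ = ∫⁻ p : ℝ × ℝ, M x p ∂(volume.prod volume) := by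
          refine lintegral_congr fun p => ?_
          have h2 : ∀ y : ℝ, Set.indicator (Ioo 0 (f y) ×ˢ Ioo 0 (g (x - y)))
              (1 : ℝ × ℝ → ℝ≥0∞) p
              = Set.indicator {y : ℝ | (0 < p.1 ∧ p.1 < f y) ∧ (0 < p.2 ∧ p.2 < g (x - y))}
                (1 : ℝ → ℝ≥0∞) y := by
            intro y
            simp only [Set.indicator_apply, Set.mem_prod, Set.mem_Ioo, Set.mem_setOf_eq, Pi.one_apply]
          simp_rw [h2]
          rw [lintegral_indicator_one (hsetmeas x p)]
  -- measurability in p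
  have Mmeas : ∀ x : ℝ, Measurable fun p : ℝ × ℝ => M x p := by
    intro x
    have h1 : (fun p : ℝ × ℝ => M x p) = fun p : ℝ × ℝ =>
        ∫⁻ y : ℝ, Set.indicator {q : (ℝ × ℝ) × ℝ |
            (0 < q.1.1 ∧ q.1.1 < f q.2) ∧ (0 < q.1.2 ∧ q.1.2 < g (x - q.2))}
          (1 : (ℝ × ℝ) × ℝ → ℝ≥0∞) (p, y) ∂volume := by
      funext p
      have h2 : ∀ y : ℝ, Set.indicator {q : (ℝ × ℝ) × ℝ |
            (0 < q.1.1 ∧ q.1.1 < f q.2) ∧ (0 < q.1.2 ∧ q.1.2 < g (x - q.2))}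
          (1 : (ℝ × ℝ) × ℝ → ℝ≥0∞) (p, y)
          = Set.indicator {y : ℝ | (0 < p.1 ∧ p.1 < f y) ∧ (0 < p.2 ∧ p.2 < g (x - y))}
            (1 : ℝ → ℝ≥0∞) y := by
        intro y; simp only [Set.indicator_apply, Set.mem_setOf_eq, Pi.one_apply]
      simp_rw [h2]
      rw [lintegral_indicator_one (hsetmeas x p)]
    rw [h1]
    refine Measurable.lintegral_prod_right' (measurable_const.indicator ?_)
    have : {q : (ℝ × ℝ) × ℝ |
          (0 < q.1.1 ∧ q.1.1 < f q.2) ∧ (0 < q.1.2 ∧ q.1.2 < g (x - q.2))}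
        = ({q : (ℝ × ℝ) × ℝ | 0 < q.1.1} ∩ {q : (ℝ × ℝ) × ℝ | q.1.1 < f q.2}) ∩
          ({q : (ℝ × ℝ) × ℝ | 0 < q.1.2} ∩ {q : (ℝ × ℝ) × ℝ | q.1.2 < g (x - q.2)}) := by
      ext q; simp only [mem_setOf_eq, mem_inter_iff]
    rw [this]
    exact ((measurableSet_lt measurable_const measurable_fst.fst).inter
        (measurableSet_lt measurable_fst.fst (hf.comp measurable_snd))).inter
      ((measurableSet_lt measurable_const measurable_fst.snd).inter
        (measurableSet_lt measurable_fst.snd (hg.comp (measurable_const.sub measurable_snd))))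
  -- continuity and monotonicity in x
  have Mprops : ∀ p : ℝ × ℝ, Continuous (fun x : ℝ => M x p) ∧
      ∀ x x' : ℝ, |x'| ≤ |x| → M x p ≤ M x' p := by
    intro p
    by_cases hp : 0 < p.1 ∧ 0 < p.2
    · have hset : ∀ x : ℝ, {y : ℝ | (0 < p.1 ∧ p.1 < f y) ∧ (0 < p.2 ∧ p.2 < g (x - y))}
          = {y : ℝ | p.1 < f y} ∩ {y : ℝ | x - y ∈ {z : ℝ | p.2 < g z}} := by
        intro x; ext y
        simp only [mem_setOf_eq, mem_inter_iff, hp.1, hp.2, true_and]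
      have hDCA : DC {y : ℝ | p.1 < f y} := by
        intro y hy z hz hle
        by_cases hy0 : y = 0
        · exact absurd (le_antisymm (by simpa [hy0] using hle) (abs_nonneg z)) (by simpa using hz)
        · exact lt_of_lt_of_le hy (hfs hz hy0 hle)
      have hDCB : DC {z : ℝ | p.2 < g z} := by
        intro y hy z hz hle
        by_cases hy0 : y = 0
        · exact absurd (le_antisymm (by simpa [hy0] using hle) (abs_nonneg z)) (by simpa using hz)
        · exact lt_of_lt_of_le hy (hgs hz hy0 hle)
      have hBm : NullMeasurableSet {z : ℝ | p.2 < g z} volume :=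
        (measurableSet_lt measurable_const hg).nullMeasurableSet
      obtain ⟨hc, hm⟩ := overlap_props _ _ hDCA hDCB hBm
      constructor
      · have : (fun x : ℝ => M x p)
            = fun x : ℝ => volume ({y : ℝ | p.1 < f y} ∩ {y : ℝ | x - y ∈ {z : ℝ | p.2 < g z}}) := by
          funext x; rw [hM]; simp only; rw [hset x]
        rw [this]; exact hc
      · intro x x' hxx
        have e1 : M x p = volume ({y : ℝ | p.1 < f y} ∩ {y : ℝ | x - y ∈ {z : ℝ | p.2 < g z}}) := by
          rw [hM]; simp only; rw [hset x]
        have e2 : M x' p = volume ({y : ℝ | p.1 < f y} ∩ {y : ℝ | x' - y ∈ {z : ℝ | p.2 < g z}}) := by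
          rw [hM]; simp only; rw [hset x']
        rw [e1, e2]; exact hm x x' hxx
    · have hempty : ∀ x : ℝ, {y : ℝ | (0 < p.1 ∧ p.1 < f y) ∧ (0 < p.2 ∧ p.2 < g (x - y))} = ∅ := by
        intro x; ext y; simp only [mem_setOf_eq, mem_empty_iff_false, iff_false]
        rintro ⟨⟨h1, _⟩, ⟨h2, _⟩⟩; exact hp ⟨h1, h2⟩
      have : (fun x : ℝ => M x p) = fun _ => 0 := by
        funext x; rw [hM]; simp only; rw [hempty x, measure_empty]
      constructor
      · rw [this]; exact continuous_const
      · intro x x' _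
        have e : ∀ z : ℝ, M z p = 0 := fun z => congrFun this z
        rw [e x, e x']
  -- part 1 : finiteness off zero
  have part1 : ∀ x : ℝ, x ≠ 0 → convR' f g x < ⊤ := by
    intro x hx
    have hnull : volume {a : ℝ | ¬ convR' f g a < ⊤} = 0 := ae_iff.mp hfin
    obtain ⟨x', hx'I, hx'fin⟩ : ∃ x' ∈ Ioo (0 : ℝ) |x|, convR' f g x' < ⊤ := by
      by_contra hcon
      push_neg at hcon
      have hsub : Ioo (0 : ℝ) |x| ⊆ {a : ℝ | ¬ convR' f g a < ⊤} :=
        fun z hz => not_lt.mpr (hcon z hz)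
      have := measure_mono_null hsub hnull
      rw [Real.volume_Ioo, sub_zero] at this
      exact (ENNReal.ofReal_pos.2 (abs_pos.2 hx)).ne' this
    have hle : |x'| ≤ |x| := by
      rw [abs_of_pos hx'I.1]; exact le_of_lt hx'I.2
    calc convR' f g x = ∫⁻ p : ℝ × ℝ, M x p ∂(volume.prod volume) := rep x
      _ ≤ ∫⁻ p : ℝ × ℝ, M x' p ∂(volume.prod volume) :=
          lintegral_mono fun p => (Mprops p).2 x x' hle
      _ = convR' f g x' := (rep x').symm
      _ < ⊤ := hx'fin
  -- continuity at points of finiteness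
  have contAt : ∀ x0 : ℝ, convR' f g x0 < ⊤ → ContinuousAt (convR' f g) x0 := by
    intro x0 h0
    obtain ⟨xs, ε, hε, hxsfin, hxsle⟩ : ∃ xs ε : ℝ, 0 < ε ∧ convR' f g xs < ⊤ ∧
        ∀ x : ℝ, |x - x0| ≤ ε → |xs| ≤ |x| := by
      by_cases hx0 : x0 = 0
      · exact ⟨0, 1, one_pos, by rwa [hx0] at h0, fun x _ => by simp⟩
      · refine ⟨x0 / 2, |x0| / 2, by positivity, part1 _ (by simpa using hx0), fun x hx => ?_⟩
        have h1 : |x0| - |x| ≤ |x0 - x| := abs_sub_abs_le_abs_sub x0 x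
        rw [abs_sub_comm] at h1
        rw [abs_div, abs_two]
        linarith
    rw [ContinuousAt]
    rw [tendsto_iff_seq_tendsto]
    intro u hu
    set v : ℕ → ℝ := fun n => if |u n - x0| ≤ ε then u n else x0 with hv_def
    have huv : ∀ᶠ n in atTop, u n = v n := by
      have hev : ∀ᶠ n in atTop, |u n - x0| ≤ ε := by
        have := hu (Metric.closedBall_mem_nhds x0 hε)
        filter_upwards [this] with n hn
        rw [Set.mem_preimage, Metric.mem_closedBall, Real.dist_eq] at hn
        exact hn
      filter_upwards [hev] with n hn
      simp [hv_def, hn]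
    have hv : Tendsto v atTop (𝓝 x0) := Filter.Tendsto.congr' huv hu
    have hvb : ∀ n, |v n - x0| ≤ ε := by
      intro n
      by_cases h : |u n - x0| ≤ ε
      · simp only [hv_def, if_pos h]; exact h
      · simp [hv_def, h, le_of_lt hε]
    have main : Tendsto (fun n => convR' f g (v n)) atTop (𝓝 (convR' f g x0)) := by
      simp_rw [rep]
      refine tendsto_lintegral_of_dominated_convergence (fun p => M xs p)
        (fun n => Mmeas (v n)) (fun n => ae_of_all _ fun p => ?_) ?_ (ae_of_all _ fun p => ?_)
      · exact (Mprops p).2 (v n) xs (hxsle _ (hvb n))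
      · rw [← rep]; exact hxsfin.ne
      · exact (((Mprops p).1).tendsto x0).comp hv
    refine main.congr' ?_
    filter_upwards [huv] with n hn
    simp only [Function.comp_apply, hn]
  exact ⟨part1, fun x hx => contAt x (part1 x hx), fun h0 => contAt 0 h0⟩


section Rearrange
variable {G : Type*} [MeasurableSpace G] (μ : Measure G) (φ : G → ℝ)

lemma S_mono {x y : ℝ} (h : |x| ≤ |y|) :
    {t : ℝ | 0 ≤ t ∧ μ {g | t < φ g} ≤ ENNReal.ofReal (2 * |x|)}
    ⊆ {t : ℝ | 0 ≤ t ∧ μ {g | t < φ g} ≤ ENNReal.ofReal (2 * |y|)} :=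
  fun t ht => ⟨ht.1, ht.2.trans (ENNReal.ofReal_le_ofReal (by linarith))⟩

lemma rearrange_eq_zero (hdeg : ∀ t : ℝ, 0 ≤ t → μ {g | t < φ g} = ∞) :
    rearrange μ φ = fun _ => 0 := by
  funext x
  have hempty : {t : ℝ | 0 ≤ t ∧ μ {g | t < φ g} ≤ ENNReal.ofReal (2 * |x|)} = ∅ := by
    ext t
    simp only [mem_setOf_eq, mem_empty_iff_false, iff_false, not_and]
    intro ht hle
    rw [hdeg t ht] at hle
    exact ENNReal.ofReal_ne_top (top_le_iff.1 hle)
  rw [rearrange, hempty, Real.sInf_empty]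

lemma rearrange_nonempty (hφ : Measurable φ) {t₀ : ℝ} (ht₀ : 0 ≤ t₀)
    (hfin : μ {g | t₀ < φ g} ≠ ∞) :
    ∀ x : ℝ, x ≠ 0 →
      {t : ℝ | 0 ≤ t ∧ μ {g | t < φ g} ≤ ENNReal.ofReal (2 * |x|)}.Nonempty := by
  intro x hx
  have hs : ∀ n : ℕ, NullMeasurableSet {g | t₀ + (n : ℝ) < φ g} μ :=
    fun n => (measurableSet_lt measurable_const hφ).nullMeasurableSet
  have hm : Antitone fun n : ℕ => {g | t₀ + (n : ℝ) < φ g} := by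
    intro m n hmn g hg
    simp only [mem_setOf_eq] at hg ⊢
    have : (m : ℝ) ≤ n := Nat.cast_le.2 hmn
    linarith
  have hint : ⋂ n : ℕ, {g | t₀ + (n : ℝ) < φ g} = ∅ := by
    ext g
    simp only [mem_iInter, mem_setOf_eq, mem_empty_iff_false, iff_false, not_forall, not_lt]
    obtain ⟨n, hn⟩ := exists_nat_gt (φ g - t₀)
    exact ⟨n, by linarith⟩
  have htend := tendsto_measure_iInter_atTop hs hm ⟨0, by simpa using hfin⟩
  rw [hint, measure_empty] at htend
  have hpos : (0 : ℝ≥0∞) < ENNReal.ofReal (2 * |x|) :=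
    ENNReal.ofReal_pos.2 (by have := abs_pos.2 hx; linarith)
  obtain ⟨n, hn⟩ := (htend.eventually_lt_const hpos).exists
  exact ⟨t₀ + n, ⟨by positivity, le_of_lt hn⟩⟩

lemma rearrange_anti
    (hNE : ∀ x : ℝ, x ≠ 0 →
      {t : ℝ | 0 ≤ t ∧ μ {g | t < φ g} ≤ ENNReal.ofReal (2 * |x|)}.Nonempty) :
    ∀ ⦃z y : ℝ⦄, z ≠ 0 → y ≠ 0 → |z| ≤ |y| →
      rearrange μ φ y ≤ rearrange μ φ z := by
  intro z y hz hy h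
  exact csInf_le_csInf ⟨0, fun t ht => ht.1⟩ (hNE z hz) (S_mono μ φ h)

lemma rearrange_measurable
    (hNE : ∀ x : ℝ, x ≠ 0 →
      {t : ℝ | 0 ≤ t ∧ μ {g | t < φ g} ≤ ENNReal.ofReal (2 * |x|)}.Nonempty) :
    Measurable (rearrange μ φ) := by
  have hanti := rearrange_anti μ φ hNE
  apply measurable_of_Ioi
  intro c
  set R := rearrange μ φ with hR
  have h1 : OrdConnected (R ⁻¹' Ioi c ∩ Ioi 0) := by
    constructor
    rintro y1 ⟨hy1, hy1p⟩ y3 ⟨hy3, hy3p⟩ y2 hy2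
    rw [mem_Ioi] at hy1p hy3p
    have hy2p : 0 < y2 := lt_of_lt_of_le hy1p hy2.1
    refine ⟨?_, hy2p⟩
    rw [mem_preimage, mem_Ioi] at hy3 ⊢
    refine lt_of_lt_of_le hy3 (hanti (ne_of_gt hy2p) (ne_of_gt (lt_of_lt_of_le hy2p hy2.2)) ?_)
    rw [abs_of_pos hy2p, abs_of_pos (lt_of_lt_of_le hy2p hy2.2)]
    exact hy2.2
  have h2 : OrdConnected (R ⁻¹' Ioi c ∩ Iio 0) := by
    constructor
    rintro y1 ⟨hy1, hy1p⟩ y3 ⟨hy3, hy3p⟩ y2 hy2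
    rw [mem_Iio] at hy1p hy3p
    have hy2p : y2 < 0 := lt_of_le_of_lt hy2.2 hy3p
    refine ⟨?_, hy2p⟩
    rw [mem_preimage, mem_Ioi] at hy1 ⊢
    refine lt_of_lt_of_le hy1 (hanti (ne_of_lt hy2p) (ne_of_lt (lt_of_le_of_lt hy2.1 hy2p)) ?_)
    rw [abs_of_neg hy2p, abs_of_neg (lt_of_le_of_lt hy2.1 hy2p)]
    linarith [hy2.1]
  have h3 : R ⁻¹' Ioi c = (R ⁻¹' Ioi c ∩ Ioi 0) ∪ (R ⁻¹' Ioi c ∩ Iio 0)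
      ∪ (R ⁻¹' Ioi c ∩ {0}) := by
    ext z
    rcases lt_trichotomy z 0 with hz | hz | hz
    · simp [mem_Ioi, mem_Iio, hz, not_lt.2 (le_of_lt hz), ne_of_lt hz]
    · simp [hz]
    · simp [mem_Ioi, mem_Iio, hz, not_lt.2 (le_of_lt hz), ne_of_gt hz]
  rw [h3]
  refine ((h1.measurableSet.union h2.measurableSet).union ?_)
  exact Set.Subsingleton.measurableSet (fun a ha b hb => by
    rw [ha.2, hb.2])

end Rearrange

lemma conv_zero_left (g : ℝ → ℝ) : convR' (fun _ => (0:ℝ)) g = fun _ => 0 := by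
  funext x; unfold convR'; simp

lemma conv_zero_right (f : ℝ → ℝ) : convR' f (fun _ => (0:ℝ)) = fun _ => 0 := by
  funext x; unfold convR'; simp

lemma trivial_conclusion (F : ℝ → ℝ≥0∞) (hF : F = fun _ => 0) :
    (∀ x : ℝ, x ≠ 0 → F x < ⊤) ∧
    (∀ x : ℝ, x ≠ 0 → ContinuousAt F x) ∧
    (F 0 < ⊤ → ContinuousAt F 0) := by
  subst hF
  exact ⟨fun x _ => by simp, fun x _ => continuousAt_const, fun _ => continuousAt_const⟩

end Stmt6Aux

open Stmt6Aux in
/-- If `φ₁* * φ₂*` is finite a.e., then it is finite and continuous away from `0`;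
if it is moreover finite at `0`, it is continuous at `0` as well. -/
theorem stmt6 {G : Type*} [Group G] [TopologicalSpace G] [IsTopologicalGroup G]
    [LocallyCompactSpace G] [MeasurableSpace G] [BorelSpace G]
    (μ : Measure G) [μ.IsHaarMeasure] [μ.IsMulRightInvariant]
    (φ₁ φ₂ : G → ℝ) (h₁ : Measurable φ₁) (h₂ : Measurable φ₂)
    (h₁0 : ∀ g, 0 ≤ φ₁ g) (h₂0 : ∀ g, 0 ≤ φ₂ g)
    (hfin : ∀ᵐ x : ℝ, convR' (rearrange μ φ₁) (rearrange μ φ₂) x < ⊤) :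
    (∀ x : ℝ, x ≠ 0 → convR' (rearrange μ φ₁) (rearrange μ φ₂) x < ⊤) ∧
    (∀ x : ℝ, x ≠ 0 →
      ContinuousAt (convR' (rearrange μ φ₁) (rearrange μ φ₂)) x) ∧
    (convR' (rearrange μ φ₁) (rearrange μ φ₂) 0 < ⊤ →
      ContinuousAt (convR' (rearrange μ φ₁) (rearrange μ φ₂)) 0) := by
  by_cases hd₁ : ∃ t : ℝ, 0 ≤ t ∧ μ {g | t < φ₁ g} ≠ ∞
  · by_cases hd₂ : ∃ t : ℝ, 0 ≤ t ∧ μ {g | t < φ₂ g} ≠ ∞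
    · obtain ⟨t₁, ht₁0, ht₁⟩ := hd₁
      obtain ⟨t₂, ht₂0, ht₂⟩ := hd₂
      have hNE₁ := rearrange_nonempty μ φ₁ h₁ ht₁0 ht₁
      have hNE₂ := rearrange_nonempty μ φ₂ h₂ ht₂0 ht₂
      exact conv_main _ _ (rearrange_measurable μ φ₁ hNE₁) (rearrange_measurable μ φ₂ hNE₂)
        (rearrange_anti μ φ₁ hNE₁) (rearrange_anti μ φ₂ hNE₂) hfin
    · push_neg at hd₂
      have hz : rearrange μ φ₂ = fun _ => 0 := rearrange_eq_zero μ φ₂ hd₂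
      rw [hz, conv_zero_right]
      exact trivial_conclusion _ rfl
  · push_neg at hd₁
    have hz : rearrange μ φ₁ = fun _ => 0 := rearrange_eq_zero μ φ₁ hd₁
    rw [hz, conv_zero_left]
    exact trivial_conclusion _ rfl
end

section
/- Let f : ℝ≥0 → ℝ be a convex function with f(0) = 0 that is continuous at 0 and has finite right derivative f'₊(0) > −∞. Then there exists a Borel measure ν on (0,∞) with ν((t₁, t₂]) = f'₊(t₂) − f'₊(t₁) for all 0 ≤ t₁ ≤ t₂, and f(y) = f'₊(0)·y + ∫₀^∞ max(y − t, 0) dν(t) for all y ≥ 0. -/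
open MeasureTheory Set Filter
open scoped ENNReal NNReal

section Aux

variable {f D : ℝ → ℝ}

private lemma aux_sub_tendsto (x : ℝ) :
    Tendsto (fun u : ℝ => u - x) (nhdsWithin x (Set.Ioi x)) (nhdsWithin 0 (Set.Ioi 0)) := by
  apply tendsto_nhdsWithin_of_tendsto_nhds_of_eventually_within
  · have : Tendsto (fun u : ℝ => u - x) (nhds x) (nhds (x - x)) :=
      (continuous_id.sub continuous_const).tendsto x
    rw [sub_self] at this
    exact this.mono_left nhdsWithin_le_nhds
  · filter_upwards [self_mem_nhdsWithin] with u hu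
    exact Set.mem_Ioi.2 (sub_pos.2 (Set.mem_Ioi.1 hu))

/-- Right derivative is at most any forward slope. -/
private lemma aux_D_le_slope (hf : ConvexOn ℝ (Set.Ici 0) f)
    (hD : ∀ t ≥ (0 : ℝ), Tendsto (fun h => (f (t + h) - f t) / h)
      (nhdsWithin 0 (Set.Ioi 0)) (nhds (D t)))
    {u z : ℝ} (hu : 0 ≤ u) (huz : u < z) : D u ≤ (f z - f u) / (z - u) := by
  refine le_of_tendsto (hD u hu) ?_
  filter_upwards [Ioo_mem_nhdsGT_of_mem ⟨le_refl (0 : ℝ), sub_pos.2 huz⟩] with h hh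
  have h1 : u + h ∈ Set.Ici (0 : ℝ) \ {u} :=
    ⟨le_trans hu (le_of_lt (lt_add_of_pos_right u hh.1)), by
      simp only [mem_singleton_iff]
      intro hcon
      nlinarith [hh.1]⟩
  have h2 : z ∈ Set.Ici (0 : ℝ) \ {z}ᶜ := by exact ⟨le_trans hu huz.le, by simp⟩
  have h2' : z ∈ Set.Ici (0 : ℝ) \ {u} := ⟨le_trans hu huz.le, by
    simp only [mem_singleton_iff]; exact fun hcon => absurd (hcon ▸ huz) (lt_irrefl u)⟩
  have hle : u + h ≤ z := by nlinarith [hh.2]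
  have := hf.slope_mono (Set.mem_Ici.2 hu) h1 h2' hle
  rw [slope_def_field, slope_def_field] at this
  simpa [add_sub_cancel_left] using this

/-- Any slope ending at `z` is at most the right derivative at `z`. -/
private lemma aux_slope_le_D (hf : ConvexOn ℝ (Set.Ici 0) f)
    (hD : ∀ t ≥ (0 : ℝ), Tendsto (fun h => (f (t + h) - f t) / h)
      (nhdsWithin 0 (Set.Ioi 0)) (nhds (D t)))
    {u z : ℝ} (hu : 0 ≤ u) (huz : u < z) : (f z - f u) / (z - u) ≤ D z := by
  refine ge_of_tendsto (hD z (le_trans hu huz.le)) ?_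
  filter_upwards [self_mem_nhdsWithin] with h hh
  have hh' : (0 : ℝ) < h := hh
  have := hf.slope_mono_adjacent (Set.mem_Ici.2 hu)
    (Set.mem_Ici.2 (by linarith : (0:ℝ) ≤ z + h)) huz (lt_add_of_pos_right z hh')
  simpa [add_sub_cancel_left] using this

/-- `f` is right-continuous at every `t ≥ 0`. -/
private lemma aux_f_rightCont
    (hD : ∀ t ≥ (0 : ℝ), Tendsto (fun h => (f (t + h) - f t) / h)
      (nhdsWithin 0 (Set.Ioi 0)) (nhds (D t)))
    {t : ℝ} (ht : 0 ≤ t) : Tendsto f (nhdsWithin t (Set.Ioi t)) (nhds (f t)) := by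
  have h0 : Tendsto (fun h : ℝ => (f (t + h) - f t) / h * h)
      (nhdsWithin 0 (Set.Ioi 0)) (nhds (D t * 0)) :=
    (hD t ht).mul (tendsto_id.mono_left nhdsWithin_le_nhds)
  rw [mul_zero] at h0
  have h1 : Tendsto (fun h : ℝ => f (t + h) - f t) (nhdsWithin 0 (Set.Ioi 0)) (nhds 0) := by
    apply h0.congr'
    filter_upwards [self_mem_nhdsWithin] with h hh
    exact div_mul_cancel₀ _ (ne_of_gt hh)
  have h2 : Tendsto (fun h : ℝ => f (t + h)) (nhdsWithin 0 (Set.Ioi 0)) (nhds (f t)) := by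
    have := h1.add_const (f t)
    simpa using this
  have := h2.comp (aux_sub_tendsto t)
  apply this.congr
  intro u
  simp [Function.comp]

end Aux

/-- Decomposition of a convex function `f` on `[0, ∞)` with `f 0 = 0`, continuous
at `0` and with finite right derivative `D t` at every `t ≥ 0`: there is a Borel
measure `ν` on `(0, ∞)` with `ν ((t₁, t₂]) = D t₂ - D t₁` and
`f y = D 0 * y + ∫ max (y - t) 0 dν (t)`. -/
theorem stmt8 (f : ℝ → ℝ) (hf : ConvexOn ℝ (Set.Ici 0) f) (hf0 : f 0 = 0)
    (hcont : ContinuousWithinAt f (Set.Ici 0) 0)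
    (D : ℝ → ℝ)
    (hD : ∀ t ≥ (0 : ℝ), Tendsto (fun h => (f (t + h) - f t) / h)
      (nhdsWithin 0 (Set.Ioi 0)) (nhds (D t))) :
    ∃ ν : Measure ℝ,
      (∀ t₁ t₂ : ℝ, 0 ≤ t₁ → t₁ ≤ t₂ →
        ν (Set.Ioc t₁ t₂) = ENNReal.ofReal (D t₂ - D t₁)) ∧
      ν (Set.Iic 0) = 0 ∧
      ∀ y ≥ (0 : ℝ),
        f y = D 0 * y + (∫⁻ t, ENNReal.ofReal (max (y - t) 0) ∂ν).toReal := by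
  classical
  set Dg : ℝ → ℝ := fun t => D (max t 0) with hDg_def
  have hDg_eq : ∀ t : ℝ, 0 ≤ t → Dg t = D t := by
    intro t ht; simp [hDg_def, max_eq_left ht]
  -- monotonicity of Dg
  have hmono : Monotone Dg := by
    intro a b hab
    have h0a : (0:ℝ) ≤ max a 0 := le_max_right a 0
    have hab' : max a 0 ≤ max b 0 := max_le_max hab (le_refl 0)
    rcases eq_or_lt_of_le hab' with h | h
    · simp [hDg_def, h]
    · have h1 := aux_D_le_slope hf hD h0a h
      have h2 := aux_slope_le_D hf hD h0a h
      exact le_trans h1 h2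
  -- right continuity of Dg
  have hrc : ∀ x : ℝ, ContinuousWithinAt Dg (Set.Ici x) x := by
    intro x
    rcases lt_or_ge x 0 with hx | hx
    · have hev : ∀ᶠ u in nhdsWithin x (Set.Ici x), Dg u = Dg x := by
        have : Set.Iio (0:ℝ) ∈ nhds x := Iio_mem_nhds hx
        filter_upwards [eventually_nhdsWithin_of_eventually_nhds
          (eventually_of_mem this (fun u hu => hu))] with u hu
        have h1 : max u 0 = 0 := max_eq_right (le_of_lt hu)
        have h2 : max x 0 = 0 := max_eq_right (le_of_lt hx)
        simp [hDg_def, h1, h2]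
      exact Filter.Tendsto.congr' (hev.mono fun u h => h.symm) tendsto_const_nhds
    · -- x ≥ 0
      have hDgx : Dg x = D x := hDg_eq x hx
      refine tendsto_order.2 ⟨?_, ?_⟩
      · intro a ha
        filter_upwards [eventually_mem_nhdsWithin] with u hu
        have : Dg x ≤ Dg u := hmono hu
        exact lt_of_lt_of_le ha this
      · intro b hb
        rw [hDgx] at hb
        -- choose z > x with slope (x, z) < (D x + b)/2
        set m : ℝ := (D x + b) / 2 with hm
        have hmb : m < b := by rw [hm]; linarith
        have hDm : D x < m := by rw [hm]; linarith
        have hev : ∀ᶠ h in nhdsWithin 0 (Set.Ioi (0:ℝ)),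
            (f (x + h) - f x) / h < m := (hD x hx).eventually (eventually_lt_nhds hDm)
        have hne : (nhdsWithin (0:ℝ) (Set.Ioi 0)).NeBot := by infer_instance
        obtain ⟨h0, hh0, hh0pos⟩ :
            ∃ h0, (f (x + h0) - f x) / h0 < m ∧ 0 < h0 := by
          rcases (hev.and self_mem_nhdsWithin).exists with ⟨h0, h1, h2⟩
          exact ⟨h0, h1, h2⟩
        set z : ℝ := x + h0 with hz
        have hxz : x < z := lt_add_of_pos_right x hh0pos
        -- g u := (f z - f u) / (z - u) is continuous within Ici x at x
        have hfc : ContinuousWithinAt f (Set.Ici x) x :=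
          continuousWithinAt_Ioi_iff_Ici.1 (aux_f_rightCont hD hx)
        have hgc : ContinuousWithinAt (fun u => (f z - f u) / (z - u)) (Set.Ici x) x :=
          (continuousWithinAt_const.sub hfc).div
            (continuousWithinAt_const.sub continuousWithinAt_id)
            (sub_ne_zero.2 hxz.ne')
        have hgx : (f z - f x) / (z - x) < b := by
          have : (f z - f x) / (z - x) = (f (x + h0) - f x) / h0 := by
            rw [hz]; congr 1; ring
          rw [this]; exact lt_trans hh0 hmb
        have hev2 : ∀ᶠ u in nhdsWithin x (Set.Ici x),
            (f z - f u) / (z - u) < b := hgc.eventually (eventually_lt_nhds hgx)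
        have hev3 : ∀ᶠ u in nhdsWithin x (Set.Ici x), u < z :=
          eventually_nhdsWithin_of_eventually_nhds
            (eventually_of_mem (Iio_mem_nhds hxz) (fun u hu => hu))
        filter_upwards [hev2, hev3, eventually_mem_nhdsWithin] with u h1 h2 h3
        rcases eq_or_lt_of_le (Set.mem_Ici.1 h3) with h4 | h4
        · rw [← h4, hDgx]; exact hb
        · have hu0 : 0 ≤ u := le_trans hx h4.le
          rw [hDg_eq u hu0]
          exact lt_of_le_of_lt (aux_D_le_slope hf hD hu0 (lt_of_le_of_lt (le_refl u) h2)) h1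
    -- end hrc
  set SF : StieltjesFunction ℝ := ⟨Dg, hmono, hrc⟩ with hSF
  set ν : Measure ℝ := SF.measure with hν
  have hSF_apply : ∀ t, SF t = Dg t := fun t => rfl
  have hIoc : ∀ a b : ℝ, ν (Set.Ioc a b) = ENNReal.ofReal (Dg b - Dg a) := by
    intro a b; rw [hν, SF.measure_Ioc]
  have htendsto : Tendsto SF atBot (nhds (D 0)) := by
    apply Filter.Tendsto.congr' _ (tendsto_const_nhds (x := D 0))
    filter_upwards [eventually_le_atBot (0:ℝ)] with u hu
    show D 0 = D (max u 0)
    rw [max_eq_right hu]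
  have hIic : ν (Set.Iic 0) = 0 := by
    rw [hν, SF.measure_Iic htendsto]
    rw [show (SF : ℝ → ℝ) 0 = Dg 0 from rfl, hDg_eq 0 le_rfl, sub_self, ENNReal.ofReal_zero]
  refine ⟨ν, ?_, hIic, ?_⟩
  · intro t₁ t₂ h1 h2
    rw [hIoc, hDg_eq t₁ h1, hDg_eq t₂ (le_trans h1 h2)]
  -- main identity
  intro y hy
  set F : ℝ → ℝ := fun u => ∫ t in (0:ℝ)..u, Dg t with hF
  -- Step 1 : f = F on [0, y]
  have hfd : ∀ x ∈ Set.Ico (0:ℝ) y, HasDerivWithinAt f (Dg x) (Set.Ici x) x := by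
    intro x hx
    rw [hDg_eq x hx.1, hasDerivWithinAt_iff_tendsto_slope, Ici_sdiff_left]
    have := (hD x hx.1).comp (aux_sub_tendsto x)
    apply this.congr
    intro u
    simp only [Function.comp, slope_def_field]
    rw [add_sub_cancel]
  have hFd : ∀ x ∈ Set.Ico (0:ℝ) y, HasDerivWithinAt F (Dg x) (Set.Ici x) x := by
    intro x hx
    have hint : IntervalIntegrable Dg volume 0 x := hmono.intervalIntegrable
    have hmeas : StronglyMeasurableAtFilter Dg (nhdsWithin x (Set.Ioi x)) :=
      ⟨Set.univ, univ_mem, hmono.measurable.aestronglyMeasurable⟩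
    exact intervalIntegral.integral_hasDerivWithinAt_right hint hmeas
      ((hrc x).mono Ioi_subset_Ici_self)
  have hfcont : ContinuousOn f (Set.Icc 0 y) := by
    intro x hx
    rcases eq_or_lt_of_le hx.1 with h | h
    · rw [← h]
      exact hcont.mono (fun u hu => hu.1)
    · have hint : ContinuousOn f (Set.Ioi 0) := by
        have := hf.continuousOn_interior
        rwa [interior_Ici] at this
      exact ((hint.continuousAt (isOpen_Ioi.mem_nhds h)).continuousWithinAt)
  have hFcont : ContinuousOn F (Set.Icc 0 y) := by
    have h1 : IntervalIntegrable Dg volume 0 y := hmono.intervalIntegrable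
    have := intervalIntegral.continuousOn_primitive_interval' h1 left_mem_uIcc
    rwa [uIcc_of_le hy] at this
  have hF0 : F 0 = 0 := intervalIntegral.integral_same
  have hfF : f y = F y := by
    have h1 : ∀ x ∈ Set.Icc (0:ℝ) y, f x ≤ F x :=
      image_le_of_deriv_right_le_deriv_boundary hfcont hfd (by rw [hf0, hF0]) hFcont hFd
        (fun x _ => le_refl _)
    have h2 : ∀ x ∈ Set.Icc (0:ℝ) y, F x ≤ f x :=
      image_le_of_deriv_right_le_deriv_boundary hFcont hFd (by rw [hf0, hF0]) hfcont hfd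
        (fun x _ => le_refl _)
    exact le_antisymm (h1 y ⟨hy, le_refl y⟩) (h2 y ⟨hy, le_refl y⟩)
  -- Step 2 : compute the lintegral
  have hDg0 : Dg 0 = D 0 := hDg_eq 0 le_rfl
  have hintegrable : IntegrableOn Dg (Set.Ioc 0 y) volume := by
    have h1 : IntervalIntegrable Dg volume 0 y := hmono.intervalIntegrable
    exact (intervalIntegrable_iff_integrableOn_Ioc_of_le hy).1 h1
  have hintegrable2 : IntegrableOn (fun s => Dg s - D 0) (Set.Ioc 0 y) volume :=
    hintegrable.sub (integrableOn_const measure_Ioc_lt_top.ne)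
  set S : Set (ℝ × ℝ) := {p : ℝ × ℝ | p.1 < p.2 ∧ p.2 ≤ y} with hS_def
  have hS : MeasurableSet S :=
    (measurableSet_lt measurable_fst measurable_snd).inter
      (measurableSet_le measurable_snd measurable_const)
  have key1 : ∀ t : ℝ, ENNReal.ofReal (max (y - t) 0)
      = ∫⁻ s, S.indicator 1 (t, s) ∂volume := by
    intro t
    have h1 : (fun s => S.indicator (1 : ℝ × ℝ → ℝ≥0∞) (t, s))
        = (Set.Ioc t y).indicator 1 := by
      ext s
      simp only [Set.indicator_apply, hS_def, Set.mem_setOf_eq, Set.mem_Ioc, Pi.one_apply]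
    rw [h1, lintegral_indicator_one measurableSet_Ioc, Real.volume_Ioc]
    rcases le_total t y with h | h
    · rw [max_eq_left (sub_nonneg.2 h)]
    · rw [max_eq_right (sub_nonpos.2 h), ENNReal.ofReal_zero]
      symm
      rw [ENNReal.ofReal_eq_zero]
      linarith
  have swap : (∫⁻ t, ENNReal.ofReal (max (y - t) 0) ∂ν)
      = ∫⁻ s, ∫⁻ t, S.indicator 1 (t, s) ∂ν ∂volume := by
    rw [show (fun t => ENNReal.ofReal (max (y - t) 0))
        = fun t => ∫⁻ s, S.indicator 1 (t, s) ∂volume from funext key1]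
    exact lintegral_lintegral_swap ((measurable_one.indicator hS).aemeasurable)
  have inner_eq : ∀ s : ℝ, (∫⁻ t, S.indicator 1 (t, s) ∂ν)
      = (Set.Iic y).indicator (fun s => ν (Set.Iio s)) s := by
    intro s
    by_cases hsy : s ≤ y
    · have h1 : (fun t => S.indicator (1 : ℝ × ℝ → ℝ≥0∞) (t, s))
          = (Set.Iio s).indicator 1 := by
        ext t
        by_cases h : t < s
        · rw [Set.indicator_of_mem (by exact ⟨h, hsy⟩), Set.indicator_of_mem (by exact h)]
          rfl
        · rw [Set.indicator_of_notMem (by simp [hS_def, h]),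
            Set.indicator_of_notMem (by exact h)]
      rw [h1, lintegral_indicator_one measurableSet_Iio,
        Set.indicator_of_mem (Set.mem_Iic.2 hsy)]
    · have h1 : (fun t => S.indicator (1 : ℝ × ℝ → ℝ≥0∞) (t, s)) = fun _ => 0 := by
        ext t
        rw [Set.indicator_of_notMem (by simp [hS_def]; intro h; linarith)]
      rw [h1, lintegral_zero, Set.indicator_of_notMem (by simpa using hsy)]
  have hν_Iio : ∀ s : ℝ, s ≤ 0 → ν (Set.Iio s) = 0 := by
    intro s hs
    have : ν (Set.Iio s) ≤ ν (Set.Iic 0) :=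
      measure_mono (fun u hu => le_trans (le_of_lt hu) hs)
    simpa [hIic] using this
  -- discontinuity points are countable hence Lebesgue-null
  have hcount : Set.Countable {x : ℝ | ¬ContinuousAt Dg x} := hmono.countable_not_continuousAt
  have hae : ∀ᵐ s ∂(volume.restrict (Set.Ioc 0 y)),
      ν (Set.Iio s) = ENNReal.ofReal (Dg s - D 0) := by
    have hnull : (volume : Measure ℝ) {x : ℝ | ¬ContinuousAt Dg x} = 0 :=
      hcount.measure_zero _
    rw [ae_restrict_iff' measurableSet_Ioc]
    refine eventually_of_mem (compl_mem_ae_iff.2 hnull) ?_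
    intro s hs hsy
    have hcontS : ContinuousAt Dg s := not_not.1 hs
    have hleft : Function.leftLim Dg s = Dg s := by
      apply leftLim_eq_of_tendsto
      exact hcontS.continuousWithinAt.tendsto
    have hsplit : Set.Iio s = Set.Iic 0 ∪ Set.Ioo 0 s := by
      ext u
      simp only [mem_Iio, mem_union, mem_Iic, mem_Ioo]
      constructor
      · intro h
        rcases le_or_gt u 0 with h' | h'
        · exact Or.inl h'
        · exact Or.inr ⟨h', h⟩
      · rintro (h | ⟨h1, h2⟩)
        · exact lt_of_le_of_lt h hsy.1
        · exact h2
    have hdisj : Disjoint (Set.Iic (0:ℝ)) (Set.Ioo 0 s) := by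
      apply Set.disjoint_left.2
      intro u hu hu2
      exact absurd hu2.1 (not_lt.2 hu)
    rw [hsplit, measure_union hdisj measurableSet_Ioo, hIic, zero_add, hν,
      SF.measure_Ioo]
    rw [show Function.leftLim (SF : ℝ → ℝ) s = Function.leftLim Dg s from rfl, hleft]
    rw [show (SF : ℝ → ℝ) 0 = Dg 0 from rfl, hDg0]
  have step2 : (∫⁻ t, ENNReal.ofReal (max (y - t) 0) ∂ν)
      = ENNReal.ofReal (∫ s in Set.Ioc 0 y, (Dg s - D 0)) := by
    rw [swap]
    have e1 : (∫⁻ s, ∫⁻ t, S.indicator 1 (t, s) ∂ν ∂volume)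
        = ∫⁻ s in Set.Iic y, ν (Set.Iio s) ∂volume := by
      rw [show (fun s => ∫⁻ t, S.indicator (1 : ℝ × ℝ → ℝ≥0∞) (t, s) ∂ν)
          = (Set.Iic y).indicator (fun s => ν (Set.Iio s)) from funext inner_eq]
      exact lintegral_indicator measurableSet_Iic _
    rw [e1]
    have e2 : (∫⁻ s in Set.Iic y, ν (Set.Iio s) ∂volume)
        = ∫⁻ s in Set.Ioc 0 y, ν (Set.Iio s) ∂volume := by
      have hsplit : Set.Iic y = Set.Iic 0 ∪ Set.Ioc 0 y := by
        ext u
        simp only [mem_Iic, mem_union, mem_Ioc]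
        constructor
        · intro h
          rcases le_or_gt u 0 with h' | h'
          · exact Or.inl h'
          · exact Or.inr ⟨h', h⟩
        · rintro (h | ⟨h1, h2⟩)
          · exact le_trans h hy
          · exact h2
      have hdisj : Disjoint (Set.Iic (0:ℝ)) (Set.Ioc 0 y) := by
        apply Set.disjoint_left.2
        intro u hu hu2
        exact absurd hu2.1 (not_lt.2 hu)
      rw [hsplit, Measure.restrict_union hdisj measurableSet_Ioc, lintegral_add_measure]
      have hzero : (∫⁻ s in Set.Iic (0:ℝ), ν (Set.Iio s) ∂volume) = 0 := by
        rw [← lintegral_zero (μ := volume.restrict (Set.Iic (0:ℝ)))]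
        apply setLIntegral_congr_fun measurableSet_Iic
        exact fun s hs => hν_Iio s hs
      rw [hzero, zero_add]
    rw [e2]
    have e3 : (∫⁻ s in Set.Ioc 0 y, ν (Set.Iio s) ∂volume)
        = ∫⁻ s in Set.Ioc 0 y, ENNReal.ofReal (Dg s - D 0) ∂volume :=
      lintegral_congr_ae hae
    rw [e3]
    have hnn : 0 ≤ᵐ[volume.restrict (Set.Ioc 0 y)] fun s => Dg s - D 0 := by
      filter_upwards [ae_restrict_mem measurableSet_Ioc] with s hs
      simp only [Pi.zero_apply, sub_nonneg]
      calc D 0 = Dg 0 := hDg0.symm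
      _ ≤ Dg s := hmono hs.1.le
    rw [← ofReal_integral_eq_lintegral_ofReal hintegrable2 hnn]
  -- Step 3 : put everything together
  have hr : (∫ s in Set.Ioc 0 y, (Dg s - D 0)) = F y - D 0 * y := by
    rw [integral_sub hintegrable (integrableOn_const measure_Ioc_lt_top.ne)]
    rw [setIntegral_const, Real.volume_real_Ioc, max_eq_left (by linarith)]
    have : F y = ∫ s in Set.Ioc 0 y, Dg s := intervalIntegral.integral_of_le hy
    rw [this, smul_eq_mul]
    ring
  have hr_nonneg : 0 ≤ ∫ s in Set.Ioc 0 y, (Dg s - D 0) := by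
    apply setIntegral_nonneg measurableSet_Ioc
    intro s hs
    rw [sub_nonneg, ← hDg0]
    exact hmono hs.1.le
  rw [hfF, step2, ENNReal.toReal_ofReal hr_nonneg, hr]
  ring
end

section
/- Let f : ℝ≥0 → ℝ be convex with f(0) = 0, and suppose f is not monotonically decreasing and f(t) < 0 for some t > 0. Then there exists t' > t with f(t') = 0; moreover f(y) ≤ 0 for all 0 ≤ y ≤ t', and f(y) ≥ 0 for all y ≥ t'. -/
open Set

/-- If `f` is convex on `[0,∞)`, `f 0 = 0`, `f` is not monotonically decreasing,
and `f t < 0` for some `t > 0`, then there is `t' > t` with `f t' = 0`, `f ≤ 0`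
on `[0, t']`, and `f ≥ 0` on `[t', ∞)`. -/
theorem stmt9 (f : ℝ → ℝ) (hf : ConvexOn ℝ (Set.Ici 0) f) (hf0 : f 0 = 0)
    (hnotdec : ∃ u v : ℝ, 0 ≤ u ∧ u < v ∧ f u < f v)
    (t : ℝ) (ht : 0 < t) (hft : f t < 0) :
    ∃ t' : ℝ, t < t' ∧ f t' = 0 ∧
      (∀ y, 0 ≤ y → y ≤ t' → f y ≤ 0) ∧
      (∀ y, t' ≤ y → 0 ≤ f y) := by

  obtain ⟨u, v, hu0, huv, hfuv⟩ := hnotdec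
  set m : ℝ := (f v - f u) / (v - u) with hm
  have hv0 : (0:ℝ) ≤ v := le_of_lt (lt_of_le_of_lt hu0 huv)
  have hm0 : 0 < m := div_pos (by linarith) (by linarith)
  -- f is eventually positive
  have key : ∀ x, v < x → f v + m * (x - v) ≤ f x := by
    intro x hvx
    have h := hf.slope_mono_adjacent (mem_Ici.2 hu0) (mem_Ici.2 (by linarith : (0:ℝ) ≤ x)) huv hvx
    rw [← hm] at h
    have hxv : (0:ℝ) < x - v := by linarith
    have := (le_div_iff₀ hxv).mp h
    linarith
  -- pick B with f B > 0, B > t, B > v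
  set B : ℝ := max (max v t + 1) (v + (1 + |f v|) / m) with hB
  have hBv : v < B := lt_of_lt_of_le (by
      have := le_max_left v t; linarith) (le_max_left _ _)
  have hBt : t < B := lt_of_lt_of_le (by
      have := le_max_right v t; linarith) (le_max_left _ _)
  have hB0 : (0:ℝ) ≤ B := by linarith
  have hfB : 0 < f B := by
    have h1 : v + (1 + |f v|) / m ≤ B := le_max_right _ _
    have h2 := key B hBv
    have h3 : (1 + |f v|) / m ≤ B - v := by linarith
    have h4 : (1 + |f v|) ≤ m * (B - v) := by
      rw [div_le_iff₀ hm0] at h3; linarith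
    have h5 : -|f v| ≤ f v := neg_abs_le _
    linarith
  -- the set S and its sup
  set S : Set ℝ := {x | x ∈ Icc t B ∧ f x ≤ 0} with hS
  have htS : t ∈ S := ⟨⟨le_refl t, le_of_lt hBt⟩, le_of_lt hft⟩
  have hSne : S.Nonempty := ⟨t, htS⟩
  have hSbdd : BddAbove S := ⟨B, fun x hx => hx.1.2⟩
  set t' : ℝ := sSup S with ht'
  -- continuity of f on Icc t B
  have hconv' : ConvexOn ℝ (Set.Ioi 0) f := hf.subset (Ioi_subset_Ici le_rfl) (convex_Ioi 0)
  have hcont : ContinuousOn f (Set.Ioi (0:ℝ)) := hconv'.continuousOn isOpen_Ioi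
  have hsub : Icc t B ⊆ Ioi (0:ℝ) := fun x hx => lt_of_lt_of_le ht hx.1
  have hcont' : ContinuousOn f (Icc t B) := hcont.mono hsub
  have hSclosed : IsClosed S := by
    have : S = Icc t B ∩ f ⁻¹' (Iic 0) := by
      ext x
      simp only [hS, mem_setOf_eq, mem_inter_iff, mem_preimage, mem_Iic]
    rw [this]
    exact hcont'.preimage_isClosed_of_isClosed isClosed_Icc isClosed_Iic
  have ht'S : t' ∈ S := hSclosed.csSup_mem hSne hSbdd
  have hft'le : f t' ≤ 0 := ht'S.2
  have htt' : t ≤ t' := ht'S.1.1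
  have ht'B : t' ≤ B := ht'S.1.2
  have ht'0 : (0:ℝ) ≤ t' := by linarith
  -- helper: from any negative point in [t, B] one can move strictly right staying in S
  have push : ∀ c : ℝ, t ≤ c → c ≤ B → f c < 0 → ∃ y, c < y ∧ y ∈ S := by
    intro c htc hcB hfc
    have hc0 : (0:ℝ) ≤ c := by linarith
    have hcB' : c < B :=
      lt_of_le_of_ne hcB (fun h => by rw [h] at hfc; linarith)
    set K := f B with hK
    set θ : ℝ := K / (K - f c) with hθ
    have hKc : 0 < K - f c := by linarith
    have hθ0 : 0 < θ := div_pos hfB hKc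
    have hθ1 : θ < 1 := by rw [div_lt_one hKc]; linarith
    refine ⟨θ • c + (1 - θ) • B, ?_, ⟨⟨?_, ?_⟩, ?_⟩⟩
    · simp only [smul_eq_mul]; nlinarith
    · simp only [smul_eq_mul]; nlinarith
    · simp only [smul_eq_mul]; nlinarith
    · have hcomb := hf.2 (mem_Ici.2 hc0) (mem_Ici.2 hB0) (le_of_lt hθ0)
        (by linarith : (0:ℝ) ≤ 1 - θ) (by ring)
      have hval : θ * f c + (1 - θ) * K = 0 := by
        field_simp [hθ]
        have h' : θ * (K - f c) = K := div_mul_cancel₀ K hKc.ne'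
        linear_combination -h'
      calc f (θ • c + (1 - θ) • B) ≤ θ * f c + (1 - θ) * f B := hcomb
        _ = 0 := hval
  -- t < t'
  have htlt : t < t' := by
    obtain ⟨y, hty, hyS⟩ := push t le_rfl (le_of_lt hBt) hft
    exact lt_of_lt_of_le hty (le_csSup hSbdd hyS)
  -- f t' = 0
  have hft'0 : f t' = 0 := by
    by_contra h
    have hneg : f t' < 0 := lt_of_le_of_ne hft'le h
    obtain ⟨y, hty, hyS⟩ := push t' htt' ht'B hneg
    exact absurd (le_csSup hSbdd hyS) (not_le.2 hty)
  refine ⟨t', htlt, hft'0, ?_, ?_⟩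
  · -- f ≤ 0 on [0, t']
    intro y hy0 hyt'
    have hconvS : Convex ℝ {x ∈ Ici (0:ℝ) | f x ≤ 0} := hf.convex_le 0
    have h0mem : (0:ℝ) ∈ {x ∈ Ici (0:ℝ) | f x ≤ 0} := ⟨mem_Ici.2 le_rfl, le_of_eq hf0⟩
    have ht'mem : t' ∈ {x ∈ Ici (0:ℝ) | f x ≤ 0} := ⟨mem_Ici.2 ht'0, le_of_eq hft'0⟩
    have : y ∈ segment ℝ (0:ℝ) t' := by
      rw [segment_eq_Icc ht'0]; exact ⟨hy0, hyt'⟩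
    exact (hconvS.segment_subset h0mem ht'mem this).2
  · -- f ≥ 0 on [t', ∞)
    intro y hy
    rcases eq_or_lt_of_le hy with rfl | hlt
    · exact le_of_eq hft'0.symm
    · have h := hf.slope_mono_adjacent (mem_Ici.2 (le_of_lt ht))
        (mem_Ici.2 (by linarith : (0:ℝ) ≤ y)) htlt hlt
      rw [hft'0] at h
      have h1 : 0 < (0 - f t) / (t' - t) := div_pos (by linarith) (by linarith)
      have h2 : 0 < y - t' := by linarith
      have := (le_div_iff₀ h2).mp (le_trans (le_of_lt h1) h)
      linarith
end

section
/- Let f : ℝ≥0 → ℝ be convex with f(0) = 0, let t > 0 satisfy f(t) < 0, and let t' > t satisfy f(t') = 0 with f ≤ 0 on [0, t']. Then for every y ≥ 0 one has y ≤ t·max(−f(y), 0)/(−f(t)) + t'·max(y − t, 0)/(t' − t). -/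
open Set

/-- Pointwise bound: if `f` is convex on `[0,∞)` with `f 0 = 0`, `f t < 0`,
`f t' = 0` with `t < t'` and `f ≤ 0` on `[0, t']`, then for all `y ≥ 0`,
`y ≤ t·max(−f(y),0)/(−f(t)) + t'·max(y−t,0)/(t'−t)`. -/
theorem stmt10 (f : ℝ → ℝ) (hf : ConvexOn ℝ (Set.Ici 0) f) (hf0 : f 0 = 0)
    (t t' : ℝ) (ht : 0 < t) (htt' : t < t')
    (hft : f t < 0) (hft' : f t' = 0)
    (hneg : ∀ y, 0 ≤ y → y ≤ t' → f y ≤ 0) :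
    ∀ y : ℝ, 0 ≤ y →
      y ≤ t * max (-f y) 0 / (-f t) + t' * max (y - t) 0 / (t' - t) := by
  intro y hy
  have hft_pos : 0 < -f t := by linarith
  have htt'0 : 0 < t' - t := by linarith
  rcases le_or_gt y t with h1 | h1
  · -- y ≤ t
    have hb : 0 ≤ y / t := div_nonneg hy ht.le
    have hb1 : y / t ≤ 1 := by rw [div_le_one ht]; exact h1
    have key := hf.2 (le_refl (0:ℝ)) ht.le (by linarith : (0:ℝ) ≤ 1 - y/t) hb (by ring)
    simp only [smul_eq_mul, mul_zero, zero_add, hf0] at key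
    have keq : (y/t) * t = y := by field_simp
    rw [keq] at key
    have hMax : (y/t) * (-f t) ≤ max (-f y) 0 := by
      refine le_max_of_le_left ?_
      nlinarith
    have hterm1 : y ≤ t * max (-f y) 0 / (-f t) := by
      rw [le_div_iff₀ hft_pos]
      calc y * (-f t) = t * ((y/t) * (-f t)) := by field_simp
        _ ≤ t * max (-f y) 0 := by
            exact mul_le_mul_of_nonneg_left hMax ht.le
    have hterm2 : 0 ≤ t' * max (y - t) 0 / (t' - t) := by
      apply div_nonneg _ htt'0.le
      exact mul_nonneg (by linarith) (le_max_right _ _)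
    linarith
  rcases le_or_gt y t' with h2 | h2
  · -- t < y ≤ t'
    set l : ℝ := (t' - y) / (t' - t) with hl
    have hl0 : 0 ≤ l := div_nonneg (by linarith) htt'0.le
    have hl1 : 0 ≤ 1 - l := by
      have : l ≤ 1 := by rw [hl, div_le_one htt'0]; linarith
      linarith
    have key := hf.2 ht.le (by linarith : (0:ℝ) ≤ t') hl0 hl1 (by ring)
    simp only [smul_eq_mul, hft'] at key
    have keq : l * t + (1 - l) * t' = y := by rw [hl]; field_simp; ring
    rw [keq] at key
    have hMax : l * (-f t) ≤ max (-f y) 0 := by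
      refine le_max_of_le_left ?_
      nlinarith
    have hterm1 : t * l ≤ t * max (-f y) 0 / (-f t) := by
      rw [le_div_iff₀ hft_pos]
      calc t * l * (-f t) = t * (l * (-f t)) := by ring
        _ ≤ t * max (-f y) 0 := mul_le_mul_of_nonneg_left hMax ht.le
    have hmax2 : max (y - t) 0 = y - t := max_eq_left (by linarith)
    rw [hmax2]
    have hsum : t * l + t' * (y - t) / (t' - t) = y := by
      rw [hl]; field_simp; ring
    linarith
  · -- y > t'
    have hterm1 : 0 ≤ t * max (-f y) 0 / (-f t) := by
      apply div_nonneg _ hft_pos.le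
      exact mul_nonneg ht.le (le_max_right _ _)
    have hmax2 : max (y - t) 0 = y - t := max_eq_left (by linarith)
    rw [hmax2]
    have : y ≤ t' * (y - t) / (t' - t) := by
      rw [le_div_iff₀ htt'0]
      nlinarith
    linarith
end
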